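/- Let T be a finite tree (a connected acyclic simple graph) on n vertices and let r be a distinguished vertex (the root). Then there exists a path P in T with r as one endpoint such that every connected component of the subgraph of T induced on the vertices not lying on P has fewer than n/2 vertices. -/

import Mathlib

open scoped ENNReal Classical

/-- The graph `G` with vertex `x` "failed": edges incident to `x` are removed,
so that walks in `G.avoid x` are exactly walks of `G` avoiding `x`
(for endpoints different from `x`). -/
def SimpleGraph.avoid {V : Type*} (G : SimpleGraph V) (x : V) : SimpleGraph V where
  Adj a b := G.Adj a b ∧ a ≠ x ∧ b ≠ x
  symm := ⟨fun _ _ h => ⟨h.1.symm, h.2.2, h.2.1⟩⟩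
  loopless := ⟨fun a h => h.1.ne rfl⟩

/-- `δ(a,b,x)` : the distance (in `ℕ∞`) between `a` and `b` in `G − x`,
with the convention that it is `∞` if `a = x` or `b = x`. -/
noncomputable def davoid {V : Type*} (G : SimpleGraph V) (a b x : V) : ℕ∞ :=
  if a = x ∨ b = x then ⊤ else (G.avoid x).edist a b

/-- `δ(v,B)` : distance from `v` to the set `B`. -/
noncomputable def dset {V : Type*} (G : SimpleGraph V) (v : V) (B : Set V) : ℕ∞ :=
  ⨅ w ∈ B, G.edist v w

/-- `δ(v,B,x)` : distance from `v` to the set `B` in `G − x`. -/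
noncomputable def dsetAvoid {V : Type*} (G : SimpleGraph V) (v : V) (B : Set V) (x : V) : ℕ∞ :=
  ⨅ w ∈ B, davoid G v w x

/-- `Ball(v,A,B) = {w ∈ A : δ(v,w) < δ(v,B)}`. -/
def ball {V : Type*} (G : SimpleGraph V) (v : V) (A B : Set V) : Set V :=
  {w ∈ A | G.edist v w < dset G v B}

/-- `Ball^x(v,A,B) = {w ∈ A : δ(v,w,x) < δ(v,B,x)}`. -/
def ballAvoid {V : Type*} (G : SimpleGraph V) (v : V) (A B : Set V) (x : V) : Set V :=
  {w ∈ A | davoid G v w x < dsetAvoid G v B x}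

/-- `Ball^x(v,A,B,ε) = {w ∈ A : (1+ε)·δ(v,w,x) < δ(v,B,x)}`. -/
def ballTrunc {V : Type*} (G : SimpleGraph V) (v : V) (A B : Set V) (x : V) (ε : ℝ) : Set V :=
  {w ∈ A | ENNReal.ofReal (1 + ε) * (davoid G v w x : ℝ≥0∞) < (dsetAvoid G v B x : ℝ≥0∞)}

/-- `C^x(w,A,B,ε) = {v ∈ V : (1+ε)·δ(v,w,x) < δ(v,B,x)}`. -/
def clusterTrunc {V : Type*} (G : SimpleGraph V) (w : V) (B : Set V) (x : V) (ε : ℝ) : Set V :=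
  {v | ENNReal.ofReal (1 + ε) * (davoid G v w x : ℝ≥0∞) < (dsetAvoid G v B x : ℝ≥0∞)}

section TreeHelpers

open SimpleGraph Set

variable {V : Type*} {T : SimpleGraph V}

variable {V : Type*} {T : SimpleGraph V}

/-- Any two vertices on a walk are joined by a walk staying on its support. -/
lemma walk_conn' {u v : V} (p : T.Walk u v) {b1 b2 : V}
    (h1 : b1 ∈ p.support) (h2 : b2 ∈ p.support) :
    ∃ W : T.Walk b1 b2, ∀ z ∈ W.support, z ∈ p.support := by
  classical
  by_cases hb : b2 ∈ (p.dropUntil b1 h1).support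
  · exact ⟨(p.dropUntil b1 h1).takeUntil b2 hb, fun z hz =>
      p.support_dropUntil_subset h1 ((p.dropUntil b1 h1).support_takeUntil_subset hb hz)⟩
  · have hb' : b2 ∈ (p.takeUntil b1 h1).support := by
      have hmem : b2 ∈ ((p.takeUntil b1 h1).append (p.dropUntil b1 h1)).support := by
        rw [p.take_spec h1]; exact h2
      rw [Walk.mem_support_append_iff] at hmem
      exact hmem.resolve_right hb
    exact ⟨((p.takeUntil b1 h1).dropUntil b2 hb').reverse, fun z hz => by
      rw [Walk.support_reverse, List.mem_reverse] at hz
      exact p.support_takeUntil_subset h1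
        ((p.takeUntil b1 h1).support_dropUntil_subset hb' hz)⟩

/-- In a tree, there is at most one edge between two disjoint connected sets. -/
lemma unique_boundary_edge' (hT : T.IsTree) {S1 S2 : Set V}
    (hdisj : Disjoint S1 S2)
    (h1 : ∀ a1 ∈ S1, ∀ a2 ∈ S1, ∃ W : T.Walk a1 a2, ∀ z ∈ W.support, z ∈ S1)
    (h2 : ∀ b1 ∈ S2, ∀ b2 ∈ S2, ∃ W : T.Walk b1 b2, ∀ z ∈ W.support, z ∈ S2)
    {a1 b1 a2 b2 : V} (ha1 : a1 ∈ S1) (hb1 : b1 ∈ S2) (ha2 : a2 ∈ S1) (hb2 : b2 ∈ S2)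
    (e1 : T.Adj a1 b1) (e2 : T.Adj a2 b2) : a1 = a2 ∧ b1 = b2 := by
  classical
  have huniq := isAcyclic_iff_path_unique.mp hT.IsAcyclic
  obtain ⟨W1, hW1⟩ := h1 a1 ha1 a2 ha2
  have hp1 : ∀ z ∈ W1.toPath.1.support, z ∈ S1 := fun z hz => hW1 z (W1.support_toPath_subset hz)
  have hb1n : b1 ∉ S1 := fun h => (hdisj.ne_of_mem h hb1) rfl
  have hb2n : b2 ∉ S1 := fun h => (hdisj.ne_of_mem h hb2) rfl
  by_cases hbb : b1 = b2
  · subst hbb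
    by_cases haa : a1 = a2
    · exact ⟨haa, rfl⟩
    · exfalso
      have hq2 : (Walk.cons e1 (Walk.cons e2.symm Walk.nil) : T.Walk a1 a2).IsPath := by
        simp [Walk.isPath_def, e1.ne, haa, e2.ne']
      have := huniq W1.toPath ⟨_, hq2⟩
      have hb1mem : b1 ∈ W1.toPath.1.support := by
        rw [this]; simp
      exact hb1n (hp1 _ hb1mem)
  · exfalso
    obtain ⟨W2, hW2⟩ := h2 b1 hb1 b2 hb2
    have hp2 : ∀ z ∈ W2.toPath.1.support, z ∈ S2 := fun z hz => hW2 z (W2.support_toPath_subset hz)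
    have hq : (Walk.cons e1.symm (W1.toPath.1.append (Walk.cons e2 Walk.nil)) : T.Walk b1 b2).IsPath := by
      rw [Walk.isPath_def]
      have hsupp : (Walk.cons e1.symm (W1.toPath.1.append (Walk.cons e2 Walk.nil)) : T.Walk b1 b2).support
          = b1 :: (W1.toPath.1.support ++ [b2]) := by
        simp [Walk.support_append]
      rw [hsupp]
      refine List.nodup_cons.mpr ⟨?_, ?_⟩
      · intro hmem
        rcases List.mem_append.mp hmem with h | h
        · exact hb1n (hp1 _ h)
        · exact hbb (List.mem_singleton.mp h)
      · refine List.Nodup.append W1.toPath.2.support_nodup (List.nodup_singleton _) ?_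
        intro z hz hz'
        rw [List.mem_singleton] at hz'
        subst hz'
        exact hb2n (hp1 _ hz)
    have := huniq ⟨_, hq⟩ W2.toPath
    have ha1mem : a1 ∈ W2.toPath.1.support := by
      rw [← this]; simp
    exact (hdisj.ne_of_mem ha1 (hp2 _ ha1mem)) rfl

/-- vertices adjacent to a component vertex, inside the set, are in the component -/
lemma mem_comp_of_adj' {S : Set V} {C : (T.induce S).ConnectedComponent} {a b : V}
    (ha : a ∈ S) (hb : b ∈ S) (hC : (⟨a, ha⟩ : S) ∈ C.supp) (hab : T.Adj a b) :
    (⟨b, hb⟩ : S) ∈ C.supp := by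
  rw [ConnectedComponent.mem_supp_iff] at hC ⊢
  rw [← hC]
  exact ConnectedComponent.eq.mpr (Adj.reachable (by simpa using hab.symm :
    (T.induce S).Adj ⟨b, hb⟩ ⟨a, ha⟩))

/-- Any two vertices in (the image of) a connected component of an induced graph
are joined by a walk staying in that image. -/
lemma comp_conn' (S : Set V) (C : (T.induce S).ConnectedComponent) {u w : V}
    (hu : u ∈ Subtype.val '' C.supp) (hw : w ∈ Subtype.val '' C.supp) :
    ∃ W : T.Walk u w, ∀ z ∈ W.support, z ∈ Subtype.val '' C.supp := by
  classical
  obtain ⟨u', hu', rfl⟩ := hu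
  obtain ⟨w', hw', rfl⟩ := hw
  rw [ConnectedComponent.mem_supp_iff] at hu' hw'
  obtain ⟨p⟩ := ConnectedComponent.eq.mp (hu'.trans hw'.symm)
  refine ⟨p.map (Embedding.induce S).toHom, ?_⟩
  intro z hz
  replace hz : z ∈ p.support.map (Embedding.induce (G := T) S).toHom := by
    rw [← Walk.support_map]; exact hz
  rw [List.mem_map] at hz
  obtain ⟨z', hz', rfl⟩ := hz
  refine ⟨z', ?_, rfl⟩
  rw [ConnectedComponent.mem_supp_iff, ← hu']
  exact ConnectedComponent.eq.mpr ((p.takeUntil z' hz').reverse.reachable)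

end TreeHelpers


open SimpleGraph Set in
/-- in a finite tree `T` rooted at `r`, there is a path starting at `r`
such that every connected component of the subgraph induced on the vertices not on
the path has fewer than `n/2` vertices. -/
theorem stmt3 {V : Type*} [Fintype V] (T : SimpleGraph V) (hT : T.IsTree) (r : V) :
    ∃ (v : V) (P : T.Walk r v), P.IsPath ∧
      ∀ C : (T.induce {z : V | z ∉ P.support}).ConnectedComponent,
        2 * C.supp.ncard < Fintype.card V := by
  classical
  set n := Fintype.card V with hn
  have hn1 : 1 ≤ n := Fintype.card_pos_iff.mpr ⟨r⟩
  have hbdd : ∀ (S0 : Set V) (C0 : (T.induce S0).ConnectedComponent), C0.supp.ncard ≤ n := by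
    intro S0 C0
    rw [← Set.ncard_image_of_injective C0.supp Subtype.val_injective]
    calc (Subtype.val '' C0.supp).ncard ≤ (Set.univ : Set V).ncard :=
          Set.ncard_le_ncard (Set.subset_univ _) Set.finite_univ
      _ = n := by rw [Set.ncard_univ, Nat.card_eq_fintype_card]
  let f : Set V → ℕ := fun S =>
    sSup (Set.range fun C : (T.induce S).ConnectedComponent => C.supp.ncard)
  have hfbdd : ∀ S0 : Set V, BddAbove (Set.range fun C : (T.induce S0).ConnectedComponent =>
      C.supp.ncard) := fun S0 => ⟨n, by rintro m ⟨C0, rfl⟩; exact hbdd S0 C0⟩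
  set A : Set ℕ := {m | ∃ (v : V) (Q : T.Walk r v), Q.IsPath ∧ f {z | z ∉ Q.support} = m}
    with hA_def
  have hA : A.Nonempty := ⟨_, r, Walk.nil, Walk.IsPath.nil, rfl⟩
  obtain ⟨v, P, hP, hMP⟩ := Nat.sInf_mem hA
  refine ⟨v, P, hP, ?_⟩
  set S : Set V := {z : V | z ∉ P.support} with hS_def
  by_contra hcon
  push_neg at hcon
  obtain ⟨C, hC⟩ := hcon
  set Cs : Set V := Subtype.val '' C.supp with hCs_def
  have hCs_card : Cs.ncard = C.supp.ncard :=
    Set.ncard_image_of_injective C.supp Subtype.val_injective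
  have hCsS : Cs ⊆ S := by rintro z ⟨z', _, rfl⟩; exact z'.2
  have hCs_disj : ∀ z ∈ Cs, z ∉ P.support := fun z hz => hCsS hz
  have hC2 : n ≤ 2 * Cs.ncard := by rw [hCs_card]; exact hC
  have hCs_ne : Cs.Nonempty := by
    rw [← Set.ncard_pos (Set.toFinite Cs)]
    omega
  obtain ⟨c0, hc0⟩ := hCs_ne
  have hrCs : r ∉ Cs := fun h => hCs_disj r h P.start_mem_support
  obtain ⟨W0⟩ := hT.isConnected.preconnected c0 r
  obtain ⟨d, _, hcCs, hxCs⟩ := W0.exists_boundary_dart Cs hc0 hrCs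
  set c : V := d.fst with hc_def
  set x : V := d.snd with hx_def
  have hadj : T.Adj c x := d.adj
  have hcP : c ∉ P.support := hCs_disj c hcCs
  have hxP : x ∈ P.support := by
    by_contra hxP
    have hcS : c ∈ S := hCsS hcCs
    have hxS : x ∈ S := hxP
    obtain ⟨c', hc', hcval⟩ := hcCs
    have hc'' : (⟨c, hcS⟩ : S) ∈ C.supp := by
      have he : c' = ⟨c, hcS⟩ := Subtype.ext hcval
      rwa [he] at hc'
    exact hxCs ⟨⟨x, hxS⟩, mem_comp_of_adj' hcS hxS hc'' hadj, rfl⟩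
  set P1 : T.Walk r c := (P.takeUntil x hxP).concat hadj.symm with hP1_def
  have hcT : c ∉ (P.takeUntil x hxP).support :=
    fun h => hcP (P.support_takeUntil_subset hxP h)
  have hP1path : P1.IsPath := by
    rw [Walk.isPath_def, hP1_def, Walk.support_concat]
    exact List.Nodup.append (hP.takeUntil hxP).support_nodup (List.nodup_singleton _)
      (fun z hz hz' => hcT ((List.mem_singleton.mp hz') ▸ hz))
  have hP1supp : ∀ z, z ∈ P1.support ↔ z ∈ (P.takeUntil x hxP).support ∨ z = c := by
    intro z
    rw [hP1_def, Walk.support_concat, List.mem_append, List.mem_singleton]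
  have hxP1 : x ∈ P1.support := (hP1supp x).mpr (Or.inl (Walk.end_mem_support _))
  have hcP1 : c ∈ P1.support := (hP1supp c).mpr (Or.inr rfl)
  set S1 : Set V := {z : V | z ∉ P1.support} with hS1_def
  have hconnCs : ∀ a1 ∈ Cs, ∀ a2 ∈ Cs, ∃ W : T.Walk a1 a2, ∀ z ∈ W.support, z ∈ Cs :=
    fun a1 h1 a2 h2 => comp_conn' S C h1 h2
  have hconnP : ∀ b1 ∈ {z : V | z ∈ P.support}, ∀ b2 ∈ {z : V | z ∈ P.support},
      ∃ W : T.Walk b1 b2, ∀ z ∈ W.support, z ∈ {z : V | z ∈ P.support} :=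
    fun b1 h1 b2 h2 => walk_conn' P h1 h2
  have hdisjCsP : Disjoint Cs {z : V | z ∈ P.support} := by
    rw [Set.disjoint_left]
    exact fun z hz hz' => hCs_disj z hz hz'
  have key : ∀ C' : (T.induce S1).ConnectedComponent, C'.supp.ncard < Cs.ncard := by
    intro C'
    set Ds : Set V := Subtype.val '' C'.supp with hDs_def
    have hDs_card : Ds.ncard = C'.supp.ncard :=
      Set.ncard_image_of_injective C'.supp Subtype.val_injective
    have hDsS1 : Ds ⊆ S1 := by rintro z ⟨z', _, rfl⟩; exact z'.2
    have hcDs : c ∉ Ds := fun h => (hDsS1 h) hcP1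
    have hxDs : x ∉ Ds := fun h => (hDsS1 h) hxP1
    rw [← hDs_card]
    by_cases hint : (Ds ∩ Cs).Nonempty
    · obtain ⟨u, huD, huC⟩ := hint
      have hsub : Ds ⊆ Cs := by
        intro w hwD
        by_contra hwC
        obtain ⟨W, hWsupp⟩ := comp_conn' S1 C' huD hwD
        obtain ⟨d2, hd2mem, h2fst, h2snd⟩ := W.exists_boundary_dart Cs huC hwC
        have h2fDs : d2.fst ∈ Ds := hWsupp _ (W.dart_fst_mem_support_of_mem_darts hd2mem)
        have h2sDs : d2.snd ∈ Ds := hWsupp _ (W.dart_snd_mem_support_of_mem_darts hd2mem)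
        have h2sP : d2.snd ∈ P.support := by
          by_contra h2sP
          have hfS : d2.fst ∈ S := hCsS h2fst
          have hsS : d2.snd ∈ S := h2sP
          obtain ⟨f', hf', hfval⟩ := h2fst
          have hf'' : (⟨d2.fst, hfS⟩ : S) ∈ C.supp := by
            have he : f' = ⟨d2.fst, hfS⟩ := Subtype.ext hfval
            rwa [he] at hf'
          exact h2snd ⟨⟨d2.snd, hsS⟩, mem_comp_of_adj' hfS hsS hf'' d2.adj, rfl⟩
        have huniq := unique_boundary_edge' hT hdisjCsP hconnCs hconnP
          h2fst h2sP hcCs hxP d2.adj hadj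
        have h2sS1 : d2.snd ∈ S1 := hDsS1 h2sDs
        rw [huniq.2] at h2sS1
        exact h2sS1 hxP1
      have hss : Ds ⊂ Cs := ⟨hsub, fun hsup => hcDs (hsup hcCs)⟩
      exact Set.ncard_lt_ncard hss (Set.toFinite Cs)
    · have hsub : Ds ⊆ Csᶜ := fun z hz hzC => hint ⟨z, hz, hzC⟩
      have hss : Ds ⊂ Csᶜ := ⟨hsub, fun hsup => hxDs (hsup hxCs)⟩
      have h1 : Ds.ncard < Csᶜ.ncard := Set.ncard_lt_ncard hss (Set.toFinite _)
      have h2 : Cs.ncard + Csᶜ.ncard = n := by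
        rw [hn, ← Nat.card_eq_fintype_card]
        exact Set.ncard_add_ncard_compl Cs
      omega
  have hCsle : Cs.ncard ≤ f S := by
    rw [hCs_card]
    exact le_csSup (hfbdd S) ⟨C, rfl⟩
  have hfS1_lt : f S1 < f S := by
    have hpos : 0 < f S := by omega
    rcases (Set.range fun C' : (T.induce S1).ConnectedComponent =>
      C'.supp.ncard).eq_empty_or_nonempty with he | hne
    · show sSup _ < f S
      rw [he, csSup_empty]
      exact hpos
    · obtain ⟨C', hC'⟩ := Nat.sSup_mem hne (hfbdd S1)
      show sSup _ < f S
      rw [← hC']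
      exact lt_of_lt_of_le (key C') hCsle
  have hfmem : f S1 ∈ A := ⟨c, P1, hP1path, rfl⟩
  have hle := Nat.sInf_le hfmem
  omega
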